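/- Let μ₀ ∈ ℝ, Σ₀ > 0, R > 0, n ≥ 1 an integer, and y₁,…,y_n ∈ ℝ. Define I₁ = ∫_ℝ (2πΣ₀)^{−1/2} e^{−(x−μ₀)²/(2Σ₀)} ∏_{j=1}^n (2πR)^{−1/2} e^{−(y_j−x)²/(2R)} dx and I₂ = ∫_ℝ (2πΣ₀)^{−1/2} e^{−(x−μ₀)²/(2Σ₀)} ∏_{j=1}^n (2πR)^{−1} e^{−(y_j−x)²/R} dx. Then, with γ = R/(nΣ₀) and ȳ = (1/n)Σ_{j=1}^n y_j, one has I₁²/I₂ = ( √(γ(2+γ)) / (1+γ) ) · exp( −(μ₀ − ȳ)² / ( Σ₀ (1+γ)(2+γ) ) ). This is the N→∞ limit of ESS_n/N for the one-dimensional stationary hidden Markov model. -/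

import Mathlib

open Finset Real MeasureTheory

lemma sqrt_pow_comm (x : ℝ) (hx : 0 ≤ x) (n : ℕ) :
    (Real.sqrt x) ^ n = Real.sqrt (x ^ n) := by
  induction n with
  | zero => simp
  | succ m ih => rw [pow_succ, pow_succ, ih, Real.sqrt_mul (pow_nonneg hx m)]

lemma gauss_int (a m k : ℝ) (ha : 0 < a) :
    ∫ x : ℝ, Real.exp (-(a * (x - m) ^ 2) + k)
      = Real.exp k * Real.sqrt (Real.pi / a) := by
  calc ∫ x : ℝ, Real.exp (-(a * (x - m) ^ 2) + k)
      = ∫ x : ℝ, Real.exp k * Real.exp (-a * (x - m) ^ 2) := by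
        congr 1; funext x; rw [← Real.exp_add]; congr 1; ring
    _ = Real.exp k * ∫ x : ℝ, Real.exp (-a * (x - m) ^ 2) := by
        rw [MeasureTheory.integral_const_mul]
    _ = Real.exp k * ∫ x : ℝ, Real.exp (-a * x ^ 2) := by
        rw [MeasureTheory.integral_sub_right_eq_self (fun x => Real.exp (-a * x ^ 2)) m]
    _ = Real.exp k * Real.sqrt (Real.pi / a) := by rw [integral_gaussian]

/-- Large-`N` limit of `ESS_n/N` for the one-dimensional stationary HMM: with
`γ = R/(nΣ₀)` and `ȳ = (1/n)∑ y_j`,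
`I₁²/I₂ = (√(γ(2+γ))/(1+γ)) exp(−(μ₀−ȳ)²/(Σ₀(1+γ)(2+γ)))`. -/
theorem stmt_14 (μ0 S0 R : ℝ) (hS0 : 0 < S0) (hR : 0 < R) (n : ℕ) (hn : 1 ≤ n)
    (y : ℕ → ℝ) :
    (∫ x : ℝ, (Real.sqrt (2 * Real.pi * S0))⁻¹ * Real.exp (-(x - μ0) ^ 2 / (2 * S0)) *
          ∏ j ∈ Icc 1 n,
            (Real.sqrt (2 * Real.pi * R))⁻¹ * Real.exp (-(y j - x) ^ 2 / (2 * R))) ^ 2 /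
      (∫ x : ℝ, (Real.sqrt (2 * Real.pi * S0))⁻¹ * Real.exp (-(x - μ0) ^ 2 / (2 * S0)) *
          ∏ j ∈ Icc 1 n,
            (2 * Real.pi * R)⁻¹ * Real.exp (-(y j - x) ^ 2 / R)) =
    (Real.sqrt ((R / (n * S0)) * (2 + R / (n * S0))) / (1 + R / (n * S0))) *
      Real.exp (-(μ0 - (∑ j ∈ Icc 1 n, y j) / n) ^ 2 /
        (S0 * (1 + R / (n * S0)) * (2 + R / (n * S0)))) := by
  have hπ := Real.pi_pos
  have hN : (0 : ℝ) < n := by exact_mod_cast hn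
  set s := ∑ j ∈ Icc 1 n, y j with hs
  set q := ∑ j ∈ Icc 1 n, (y j) ^ 2 with hq
  set a1 : ℝ := (R + n * S0) / (2 * S0 * R) with ha1def
  set a2 : ℝ := (R + 2 * n * S0) / (2 * S0 * R) with ha2def
  set m1 : ℝ := (R * μ0 + S0 * s) / (R + n * S0) with hm1def
  set m2 : ℝ := (R * μ0 + 2 * S0 * s) / (R + 2 * n * S0) with hm2def
  set k1 : ℝ := a1 * m1 ^ 2 - (μ0 ^ 2 / (2 * S0) + q / (2 * R)) with hk1def
  set k2 : ℝ := a2 * m2 ^ 2 - (μ0 ^ 2 / (2 * S0) + q / R) with hk2def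
  have hd1 : (0 : ℝ) < R + n * S0 := by positivity
  have hd2 : (0 : ℝ) < R + 2 * n * S0 := by positivity
  have ha1 : 0 < a1 := by rw [ha1def]; positivity
  have ha2 : 0 < a2 := by rw [ha2def]; positivity
  have hsum1 : ∀ x : ℝ, ∑ j ∈ Icc 1 n, (-(y j - x) ^ 2 / (2 * R))
      = (-(n * x ^ 2) + 2 * s * x - q) / (2 * R) := by
    intro x
    rw [← Finset.sum_div]
    congr 1
    have h : ∀ j ∈ Icc 1 n, -(y j - x) ^ 2 = 2 * x * y j - (y j) ^ 2 - x ^ 2 :=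
      fun j _ => by ring
    rw [Finset.sum_congr rfl h, Finset.sum_sub_distrib, Finset.sum_sub_distrib,
      ← Finset.mul_sum, Finset.sum_const, Nat.card_Icc, Nat.add_sub_cancel, nsmul_eq_mul,
      ← hs, ← hq]
    ring
  have hsum2 : ∀ x : ℝ, ∑ j ∈ Icc 1 n, (-(y j - x) ^ 2 / R)
      = (-(n * x ^ 2) + 2 * s * x - q) / R := by
    intro x
    rw [← Finset.sum_div]
    congr 1
    have h : ∀ j ∈ Icc 1 n, -(y j - x) ^ 2 = 2 * x * y j - (y j) ^ 2 - x ^ 2 :=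
      fun j _ => by ring
    rw [Finset.sum_congr rfl h, Finset.sum_sub_distrib, Finset.sum_sub_distrib,
      ← Finset.mul_sum, Finset.sum_const, Nat.card_Icc, Nat.add_sub_cancel, nsmul_eq_mul,
      ← hs, ← hq]
    ring
  have h1 : (∫ x : ℝ, (Real.sqrt (2 * Real.pi * S0))⁻¹ * Real.exp (-(x - μ0) ^ 2 / (2 * S0)) *
          ∏ j ∈ Icc 1 n,
            (Real.sqrt (2 * Real.pi * R))⁻¹ * Real.exp (-(y j - x) ^ 2 / (2 * R)))
      = (Real.sqrt (2 * Real.pi * S0))⁻¹ * ((Real.sqrt (2 * Real.pi * R))⁻¹) ^ n *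
          (Real.exp k1 * Real.sqrt (Real.pi / a1)) := by
    have key : ∀ x : ℝ,
        (Real.sqrt (2 * Real.pi * S0))⁻¹ * Real.exp (-(x - μ0) ^ 2 / (2 * S0)) *
          ∏ j ∈ Icc 1 n,
            (Real.sqrt (2 * Real.pi * R))⁻¹ * Real.exp (-(y j - x) ^ 2 / (2 * R))
        = (Real.sqrt (2 * Real.pi * S0))⁻¹ * ((Real.sqrt (2 * Real.pi * R))⁻¹) ^ n *
            Real.exp (-(a1 * (x - m1) ^ 2) + k1) := by
      intro x
      rw [Finset.prod_mul_distrib, Finset.prod_const, Nat.card_Icc, Nat.add_sub_cancel,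
        ← Real.exp_sum, hsum1 x]
      have hE : -(x - μ0) ^ 2 / (2 * S0) + (-(n * x ^ 2) + 2 * s * x - q) / (2 * R)
          = -(a1 * (x - m1) ^ 2) + k1 := by
        rw [hk1def, ha1def, hm1def]
        field_simp
        ring
      rw [← hE, Real.exp_add]
      ring
    calc (∫ x : ℝ, (Real.sqrt (2 * Real.pi * S0))⁻¹ * Real.exp (-(x - μ0) ^ 2 / (2 * S0)) *
          ∏ j ∈ Icc 1 n,
            (Real.sqrt (2 * Real.pi * R))⁻¹ * Real.exp (-(y j - x) ^ 2 / (2 * R)))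
        = ∫ x : ℝ, (Real.sqrt (2 * Real.pi * S0))⁻¹ * ((Real.sqrt (2 * Real.pi * R))⁻¹) ^ n *
            Real.exp (-(a1 * (x - m1) ^ 2) + k1) := by
          congr 1; funext x; exact key x
      _ = (Real.sqrt (2 * Real.pi * S0))⁻¹ * ((Real.sqrt (2 * Real.pi * R))⁻¹) ^ n *
            (Real.exp k1 * Real.sqrt (Real.pi / a1)) := by
          rw [MeasureTheory.integral_const_mul, gauss_int _ _ _ ha1]
  have h2 : (∫ x : ℝ, (Real.sqrt (2 * Real.pi * S0))⁻¹ * Real.exp (-(x - μ0) ^ 2 / (2 * S0)) *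
          ∏ j ∈ Icc 1 n,
            (2 * Real.pi * R)⁻¹ * Real.exp (-(y j - x) ^ 2 / R))
      = (Real.sqrt (2 * Real.pi * S0))⁻¹ * ((2 * Real.pi * R)⁻¹) ^ n *
          (Real.exp k2 * Real.sqrt (Real.pi / a2)) := by
    have key : ∀ x : ℝ,
        (Real.sqrt (2 * Real.pi * S0))⁻¹ * Real.exp (-(x - μ0) ^ 2 / (2 * S0)) *
          ∏ j ∈ Icc 1 n,
            (2 * Real.pi * R)⁻¹ * Real.exp (-(y j - x) ^ 2 / R)
        = (Real.sqrt (2 * Real.pi * S0))⁻¹ * ((2 * Real.pi * R)⁻¹) ^ n *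
            Real.exp (-(a2 * (x - m2) ^ 2) + k2) := by
      intro x
      rw [Finset.prod_mul_distrib, Finset.prod_const, Nat.card_Icc, Nat.add_sub_cancel,
        ← Real.exp_sum, hsum2 x]
      have hE : -(x - μ0) ^ 2 / (2 * S0) + (-(n * x ^ 2) + 2 * s * x - q) / R
          = -(a2 * (x - m2) ^ 2) + k2 := by
        rw [hk2def, ha2def, hm2def]
        field_simp
        ring
      rw [← hE, Real.exp_add]
      ring
    calc (∫ x : ℝ, (Real.sqrt (2 * Real.pi * S0))⁻¹ * Real.exp (-(x - μ0) ^ 2 / (2 * S0)) *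
          ∏ j ∈ Icc 1 n,
            (2 * Real.pi * R)⁻¹ * Real.exp (-(y j - x) ^ 2 / R))
        = ∫ x : ℝ, (Real.sqrt (2 * Real.pi * S0))⁻¹ * ((2 * Real.pi * R)⁻¹) ^ n *
            Real.exp (-(a2 * (x - m2) ^ 2) + k2) := by
          congr 1; funext x; exact key x
      _ = (Real.sqrt (2 * Real.pi * S0))⁻¹ * ((2 * Real.pi * R)⁻¹) ^ n *
            (Real.exp k2 * Real.sqrt (Real.pi / a2)) := by
          rw [MeasureTheory.integral_const_mul, gauss_int _ _ _ ha2]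
  rw [h1, h2]
  -- now pure algebra with square roots
  have hu : (0:ℝ) < 2 * Real.pi * S0 := by positivity
  have hv : (0:ℝ) < 2 * Real.pi * R := by positivity
  set u : ℝ := 2 * Real.pi * S0 with hu_def
  set v : ℝ := 2 * Real.pi * R with hv_def
  set A1 : ℝ := u⁻¹ * (v⁻¹) ^ n * (Real.pi / a1) with hA1def
  set A2 : ℝ := u⁻¹ * ((v⁻¹) ^ n) ^ 2 * (Real.pi / a2) with hA2def
  have hA1 : 0 ≤ A1 := by rw [hA1def]; positivity
  have hA2 : 0 ≤ A2 := by rw [hA2def]; positivity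
  have e1 : (Real.sqrt u)⁻¹ * ((Real.sqrt v)⁻¹) ^ n * (Real.exp k1 * Real.sqrt (Real.pi / a1))
      = Real.sqrt A1 * Real.exp k1 := by
    rw [← Real.sqrt_inv, ← Real.sqrt_inv, sqrt_pow_comm _ (by positivity),
      hA1def, Real.sqrt_mul (by positivity), Real.sqrt_mul (by positivity)]
    ring
  have e2 : (Real.sqrt u)⁻¹ * (v⁻¹) ^ n * (Real.exp k2 * Real.sqrt (Real.pi / a2))
      = Real.sqrt A2 * Real.exp k2 := by
    have hvn : (v⁻¹ : ℝ) ^ n = Real.sqrt (((v⁻¹) ^ n) ^ 2) := by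
      rw [Real.sqrt_sq (by positivity)]
    rw [← Real.sqrt_inv, hvn, hA2def, Real.sqrt_mul (by positivity),
      Real.sqrt_mul (by positivity)]
    ring
  rw [e1, e2]
  have lhs_eq : (Real.sqrt A1 * Real.exp k1) ^ 2 / (Real.sqrt A2 * Real.exp k2)
      = Real.sqrt (A1 ^ 2 / A2) * Real.exp (2 * k1 - k2) := by
    rw [mul_pow, Real.sq_sqrt hA1, mul_div_mul_comm]
    congr 1
    · rw [Real.sqrt_div (sq_nonneg A1), Real.sqrt_sq hA1]
    · rw [sq, ← Real.exp_add, ← Real.exp_sub]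
      congr 1
      ring
  rw [lhs_eq]
  have hne : ((n : ℝ) ≠ 0) := hN.ne'
  have hS0' := hS0.ne'
  have hR' := hR.ne'
  have hπ' := hπ.ne'
  have hd1' := hd1.ne'
  have hd2' := hd2.ne'
  have ha1' := ha1.ne'
  have ha2' := ha2.ne'
  have hγ : (0:ℝ) < R / (n * S0) := by positivity
  have h1γ : (0:ℝ) < 1 + R / (n * S0) := by positivity
  have hc : A1 ^ 2 / A2 = (R / (n * S0)) * (2 + R / (n * S0)) / (1 + R / (n * S0)) ^ 2 := by
    rw [hA1def, hA2def, ha1def, ha2def, hu_def, hv_def]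
    field_simp
    ring
  have hk : 2 * k1 - k2 = -(μ0 - s / n) ^ 2 /
      (S0 * (1 + R / (n * S0)) * (2 + R / (n * S0))) := by
    rw [hk1def, hk2def, ha1def, ha2def, hm1def, hm2def]
    field_simp
    ring
  rw [hc, hk, Real.sqrt_div (by positivity : (0:ℝ) ≤ (R / (n * S0)) * (2 + R / (n * S0))),
    Real.sqrt_sq h1γ.le]
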